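/- arXiv:2108.12447 — 3 statements merged into one kernel-verified Lean document; each statement's English description precedes it below -/
import Mathlib

section
/- Let U be in SpSt(2n,2k) and Δ in R^{2n×2k} with U^+Δ = -Δ^+U. Define Ω̃ := (I_{2n} - (1/2) U U^+) Δ U^+ - U Δ^+ (I_{2n} - (1/2) U U^+). Then Ω̃ is Hamiltonian (Ω̃^+ = -Ω̃) and Ω̃ U = Δ. -/
open Matrix

noncomputable section

/-- The standard symplectic matrix `J = [[0, I],[-I, 0]]` of size `2m`. -/
def Jmat (m : ℕ) : Matrix (Fin m ⊕ Fin m) (Fin m ⊕ Fin m) ℝ :=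
  Matrix.fromBlocks 0 1 (-1) 0

/-- The symplectic inverse `A⁺ = J₂ₖᵀ Aᵀ J₂ₙ` of a `2n × 2k` real matrix. -/
def sympInv {n k : ℕ} (A : Matrix (Fin n ⊕ Fin n) (Fin k ⊕ Fin k) ℝ) :
    Matrix (Fin k ⊕ Fin k) (Fin n ⊕ Fin n) ℝ :=
  (Jmat k)ᵀ * Aᵀ * Jmat n

lemma Jmat_mul_transpose (m : ℕ) : Jmat m * (Jmat m)ᵀ = 1 := by
  simp [Jmat, fromBlocks_transpose, fromBlocks_multiply, fromBlocks_one]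

lemma Jmat_transpose_mul (m : ℕ) : (Jmat m)ᵀ * Jmat m = 1 := by
  simp [Jmat, fromBlocks_transpose, fromBlocks_multiply, fromBlocks_one]

lemma Jmat_mul_Jmat (m : ℕ) : Jmat m * Jmat m = -1 := by
  simp [Jmat, fromBlocks_multiply]
  ext i j
  cases i <;> cases j <;> simp [fromBlocks, one_apply]

lemma Jmat_transpose_sq (m : ℕ) : (Jmat m)ᵀ * (Jmat m)ᵀ = -1 := by
  rw [← transpose_mul, Jmat_mul_Jmat]
  simp

lemma sympInv_mul {n k m : ℕ} (A : Matrix (Fin n ⊕ Fin n) (Fin k ⊕ Fin k) ℝ)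
    (B : Matrix (Fin k ⊕ Fin k) (Fin m ⊕ Fin m) ℝ) :
    sympInv (A * B) = sympInv B * sympInv A := by
  unfold sympInv
  rw [transpose_mul]
  simp only [Matrix.mul_assoc]
  rw [← Matrix.mul_assoc (Jmat k), Jmat_mul_transpose, Matrix.one_mul]

lemma sympInv_sympInv {n k : ℕ} (A : Matrix (Fin n ⊕ Fin n) (Fin k ⊕ Fin k) ℝ) :
    sympInv (sympInv A) = A := by
  unfold sympInv
  rw [transpose_mul, transpose_mul, transpose_transpose, transpose_transpose]
  simp only [Matrix.mul_assoc]
  rw [Jmat_mul_Jmat, ← Matrix.mul_assoc, Jmat_transpose_sq]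
  simp

lemma sympInv_one {n : ℕ} : sympInv (1 : Matrix (Fin n ⊕ Fin n) (Fin n ⊕ Fin n) ℝ) = 1 := by
  unfold sympInv
  rw [transpose_one, Matrix.mul_one, Jmat_transpose_mul]

lemma sympInv_sub {n k : ℕ} (A B : Matrix (Fin n ⊕ Fin n) (Fin k ⊕ Fin k) ℝ) :
    sympInv (A - B) = sympInv A - sympInv B := by
  unfold sympInv
  rw [transpose_sub, Matrix.mul_sub, Matrix.sub_mul]

lemma sympInv_smul {n k : ℕ} (c : ℝ) (A : Matrix (Fin n ⊕ Fin n) (Fin k ⊕ Fin k) ℝ) :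
    sympInv (c • A) = c • sympInv A := by
  unfold sympInv
  rw [transpose_smul, Matrix.mul_smul, Matrix.smul_mul]

theorem stmt_6 (n k : ℕ) (U Δ : Matrix (Fin n ⊕ Fin n) (Fin k ⊕ Fin k) ℝ)
    (hU : sympInv U * U = 1) (hΔ : sympInv U * Δ = -(sympInv Δ * U)) :
    sympInv ((1 - (1/2 : ℝ) • (U * sympInv U)) * Δ * sympInv U
        - U * sympInv Δ * (1 - (1/2 : ℝ) • (U * sympInv U)))
      = -((1 - (1/2 : ℝ) • (U * sympInv U)) * Δ * sympInv U
        - U * sympInv Δ * (1 - (1/2 : ℝ) • (U * sympInv U))) ∧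
    ((1 - (1/2 : ℝ) • (U * sympInv U)) * Δ * sympInv U
        - U * sympInv Δ * (1 - (1/2 : ℝ) • (U * sympInv U))) * U = Δ := by
  set P : Matrix (Fin n ⊕ Fin n) (Fin n ⊕ Fin n) ℝ :=
    1 - (1/2 : ℝ) • (U * sympInv U) with hP
  have hPsymp : sympInv P = P := by
    rw [hP, sympInv_sub, sympInv_one, sympInv_smul, sympInv_mul, sympInv_sympInv]
  constructor
  · rw [sympInv_sub, sympInv_mul, sympInv_mul, sympInv_mul, sympInv_mul,
      sympInv_sympInv, sympInv_sympInv, hPsymp]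
    rw [neg_sub]
    simp only [Matrix.mul_assoc]
  · have hPU : P * U = (1/2 : ℝ) • U := by
      rw [hP, Matrix.sub_mul, Matrix.one_mul, Matrix.smul_mul, Matrix.mul_assoc, hU,
        Matrix.mul_one]
      ext i j
      simp
      ring
    rw [Matrix.sub_mul, Matrix.mul_assoc (P * Δ), hU, Matrix.mul_one,
      Matrix.mul_assoc (U * sympInv Δ), hPU, Matrix.mul_smul]
    rw [hP, Matrix.sub_mul, Matrix.one_mul, Matrix.smul_mul, Matrix.mul_assoc, hΔ]
    simp only [Matrix.mul_neg, smul_neg, sub_neg_eq_add, Matrix.mul_assoc]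
    abel
end
end

section
/- For X in R^{n×k} and Y in R^{n×k} with Y^T X invertible, the matrix exponential of the rank-deficient product satisfies exp(X Y^T) = I_n + X (exp(Y^T X) - I_k) (Y^T X)^{-1} Y^T. -/
open Matrix

noncomputable section

theorem stmt_8 (n k : ℕ) (X Y : Matrix (Fin n) (Fin k) ℝ)
    (hInv : IsUnit (Yᵀ * X)) :
    NormedSpace.exp (X * Yᵀ)
      = 1 + X * (NormedSpace.exp (Yᵀ * X) - 1) * (Yᵀ * X)⁻¹ * Yᵀ := by
  letI : SeminormedRing (Matrix (Fin k) (Fin k) ℝ) := Matrix.linftyOpSemiNormedRing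
  letI : NormedRing (Matrix (Fin k) (Fin k) ℝ) := Matrix.linftyOpNormedRing
  letI : NormedAlgebra ℝ (Matrix (Fin k) (Fin k) ℝ) := Matrix.linftyOpNormedAlgebra
  letI : SeminormedRing (Matrix (Fin n) (Fin n) ℝ) := Matrix.linftyOpSemiNormedRing
  letI : NormedRing (Matrix (Fin n) (Fin n) ℝ) := Matrix.linftyOpNormedRing
  letI : NormedAlgebra ℝ (Matrix (Fin n) (Fin n) ℝ) := Matrix.linftyOpNormedAlgebra
  set x : Matrix (Fin k) (Fin k) ℝ := Yᵀ * X with hx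
  -- summability of the shifted series
  have hS : Summable (fun m : ℕ => (((m + 1).factorial : ℝ))⁻¹ • x ^ m) := by
    have h0 : Summable (fun m : ℕ => ‖x‖ ^ m / (m.factorial : ℝ)) :=
      Real.summable_pow_div_factorial ‖x‖
    refine Summable.of_norm (Summable.of_nonneg_of_le (fun m => norm_nonneg _)
      (fun m => ?_) h0)
    rw [norm_smul]
    have h1 : ‖x ^ m‖ ≤ ‖x‖ ^ m := by
      cases m with
      | zero =>
        simp only [pow_zero]
        cases Nat.eq_zero_or_pos k with
        | inl hk =>
          subst hk
          simp [Matrix.linfty_opNorm_def]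
        | inr hk =>
          haveI : Nonempty (Fin k) := ⟨⟨0, hk⟩⟩
          exact le_of_eq norm_one
      | succ m => exact norm_pow_le' x m.succ_pos
    have h2 : ‖(((m + 1).factorial : ℝ))⁻¹‖ ≤ ((m.factorial : ℝ))⁻¹ := by
      rw [Real.norm_eq_abs, abs_of_nonneg (by positivity)]
      apply inv_anti₀ (by positivity)
      exact_mod_cast Nat.factorial_le (Nat.le_succ m)
    calc ‖(((m + 1).factorial : ℝ))⁻¹‖ * ‖x ^ m‖
        ≤ ((m.factorial : ℝ))⁻¹ * ‖x‖ ^ m := by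
          apply mul_le_mul h2 h1 (norm_nonneg _) (by positivity)
      _ = ‖x‖ ^ m / (m.factorial : ℝ) := by ring
  set S : Matrix (Fin k) (Fin k) ℝ := ∑' m : ℕ, (((m + 1).factorial : ℝ))⁻¹ • x ^ m with hSdef
  -- S commutes with x
  have hcomm : x * S = S * x := by
    rw [hSdef, ← Summable.tsum_mul_left x hS, ← Summable.tsum_mul_right x hS]
    congr 1
    funext m
    rw [mul_smul_comm, smul_mul_assoc, ← pow_succ, ← pow_succ']
  -- exp x - 1 = x * S
  have h2 : NormedSpace.exp x - 1 = x * S := by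
    rw [NormedSpace.exp_eq_tsum (𝕂 := ℝ)]
    beta_reduce
    rw [Summable.tsum_eq_zero_add (by exact NormedSpace.expSeries_summable' (𝕂 := ℝ) x)]
    simp only [pow_zero, Nat.factorial_zero, Nat.cast_one, inv_one, one_smul]
    rw [add_sub_cancel_left, hSdef, ← Summable.tsum_mul_left x hS]
    congr 1
    funext m
    rw [mul_smul_comm, ← pow_succ']
  -- power identity
  have hpow : ∀ m : ℕ, (X * Yᵀ) ^ (m + 1) = X * x ^ m * Yᵀ := by
    intro m
    induction m with
    | zero => simp [Matrix.mul_assoc]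
    | succ m ih =>
        rw [pow_succ, ih, pow_succ]
        simp only [Matrix.mul_assoc, hx]
  -- exp (X Yᵀ) = 1 + X * S * Yᵀ
  have h1 : NormedSpace.exp (X * Yᵀ) = 1 + X * S * Yᵀ := by
    rw [NormedSpace.exp_eq_tsum (𝕂 := ℝ)]
    beta_reduce
    rw [Summable.tsum_eq_zero_add (by exact NormedSpace.expSeries_summable' (𝕂 := ℝ) (X * Yᵀ))]
    simp only [pow_zero, Nat.factorial_zero, Nat.cast_one, inv_one, one_smul]
    congr 1
    have hg : Continuous (fun A : Matrix (Fin k) (Fin k) ℝ => X * A * Yᵀ) := by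
      exact ((continuous_const.matrix_mul continuous_id).matrix_mul continuous_const)
    let g : Matrix (Fin k) (Fin k) ℝ →+ Matrix (Fin n) (Fin n) ℝ :=
      { toFun := fun A => X * A * Yᵀ
        map_zero' := by simp
        map_add' := fun A B => by
          show X * (A + B) * Yᵀ = X * A * Yᵀ + X * B * Yᵀ
          rw [Matrix.mul_add, Matrix.add_mul] }
    have hmap := (hS.hasSum.map g hg).tsum_eq
    show _ = g (∑' m : ℕ, (((m + 1).factorial : ℝ))⁻¹ • x ^ m)
    rw [← hmap]
    congr 1
    funext m
    show (((m + 1).factorial : ℝ))⁻¹ • (X * Yᵀ) ^ (m + 1)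
        = X * ((((m + 1).factorial : ℝ))⁻¹ • x ^ m) * Yᵀ
    rw [hpow m, Matrix.mul_smul, Matrix.smul_mul]
  -- conclude
  have hdet : IsUnit x.det := (Matrix.isUnit_iff_isUnit_det x).mp hInv
  rw [h1, h2, hcomm, ← Matrix.mul_assoc X S x]
  have hcancel : X * S * x * x⁻¹ = X * S := Matrix.mul_nonsing_inv_cancel_right x (X * S) hdet
  rw [hcancel]
end
end

section
/- Let P, F in R^{2n×2n} with P^2 = P, P^+ = P, F^2 = F, F^+ = F. Suppose Ω̃ in R^{2n×2n} satisfies exp(2Ω̃) = (I - 2F)(I - 2P) and (I - 2P) Ω̃ (I - 2P) = -Ω̃. Then exp(Ω̃) P exp(-Ω̃) = F. -/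
open Matrix

noncomputable section

theorem stmt_10 (n : ℕ) (P F Ω : Matrix (Fin n ⊕ Fin n) (Fin n ⊕ Fin n) ℝ)
    (hP2 : P * P = P) (hPplus : sympInv P = P)
    (hF2 : F * F = F) (hFplus : sympInv F = F)
    (hexp : NormedSpace.exp ((2 : ℝ) • Ω) = (1 - 2 • F) * (1 - 2 • P))
    (hflip : (1 - 2 • P) * Ω * (1 - 2 • P) = -Ω) :
    NormedSpace.exp Ω * P * NormedSpace.exp (-Ω) = F := by
  set S : Matrix (Fin n ⊕ Fin n) (Fin n ⊕ Fin n) ℝ := 1 - 2 • P with hS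
  have hS2 : S * S = 1 := by
    simp only [hS, mul_sub, sub_mul, mul_one, one_mul, smul_mul_assoc, mul_smul_comm, hP2]
    abel
  set u : (Matrix (Fin n ⊕ Fin n) (Fin n ⊕ Fin n) ℝ)ˣ := ⟨S, S, hS2, hS2⟩ with hu
  have huinv : (↑u⁻¹ : Matrix (Fin n ⊕ Fin n) (Fin n ⊕ Fin n) ℝ) = S := rfl
  have hconj : S * NormedSpace.exp Ω * S = NormedSpace.exp (-Ω) := by
    have := Matrix.exp_units_conj u Ω
    rw [huinv] at this
    rw [← this, hflip]
  have h2 : NormedSpace.exp ((2 : ℝ) • Ω) = NormedSpace.exp Ω * NormedSpace.exp Ω := by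
    have : (2 : ℝ) • Ω = Ω + Ω := by
      rw [two_smul]
    rw [this, Matrix.exp_add_of_commute Ω Ω (Commute.refl Ω)]
  have hES : NormedSpace.exp Ω * S = S * NormedSpace.exp (-Ω) := by
    calc NormedSpace.exp Ω * S = S * (S * NormedSpace.exp Ω * S) := by
          rw [← mul_assoc, ← mul_assoc, hS2, one_mul]
      _ = S * NormedSpace.exp (-Ω) := by rw [hconj]
  have hEinv : NormedSpace.exp Ω * NormedSpace.exp (-Ω) = 1 := by
    rw [← Matrix.exp_add_of_commute Ω (-Ω) (Commute.neg_right (Commute.refl Ω)), add_neg_cancel,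
      NormedSpace.exp_zero]
  have hT : 1 - 2 • F = NormedSpace.exp Ω * S * NormedSpace.exp (-Ω) := by
    calc 1 - 2 • F = NormedSpace.exp ((2:ℝ) • Ω) * S := by
          rw [hexp, mul_assoc, hS2, mul_one]
      _ = NormedSpace.exp Ω * NormedSpace.exp Ω * S := by rw [h2]
      _ = NormedSpace.exp Ω * S * NormedSpace.exp (-Ω) := by
          conv_lhs => rw [mul_assoc, hES]
          rw [mul_assoc]
  have expand : NormedSpace.exp Ω * S * NormedSpace.exp (-Ω)
      = 1 - 2 • (NormedSpace.exp Ω * P * NormedSpace.exp (-Ω)) := by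
    rw [hS]
    simp only [mul_sub, sub_mul, mul_one, one_mul, smul_mul_assoc, mul_smul_comm, hEinv]
  rw [expand, sub_right_inj] at hT
  ext i j
  have h := congrFun (congrFun hT i) j
  simp only [Matrix.smul_apply, smul_eq_mul, nsmul_eq_mul, Nat.cast_ofNat] at h
  linarith
end
end
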